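/- For all t > 0, x > 0, h > 0, the quantity J(t,x,h) := ∫₀^t √s [ (1−e^{−x²/s})/x² + (1−e^{−(x+h)²/s})/(x+h)² − 2 e^{−h²/(4s)} (1−e^{−x(x+h)/s})/(x(x+h)) ] ds satisfies J(t,x,h) ≤ 4h + Γ(1/2) x(x+h)/h. -/

import Mathlib

open MeasureTheory Real Set


lemma phi_integral {u : ℝ} (hu : 0 < u) :
    (1 - Real.exp (-u)) / u = ∫ v in (0:ℝ)..1, Real.exp (-(u * v)) := by
  have h : ∀ v ∈ Set.uIcc (0:ℝ) 1,
      HasDerivAt (fun w : ℝ => -(Real.exp (-(u * w)) / u)) (Real.exp (-(u * v))) v := by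
    intro v _
    have h1 : HasDerivAt (fun w : ℝ => -(u * w)) (-u) v := by
      have h0 := ((hasDerivAt_id v).const_mul u).neg
      simp only [id, mul_one] at h0
      exact h0
    have h2 := (h1.exp).div_const u
    have h3 := h2.neg
    rw [show Real.exp (-(u * v)) = -(Real.exp (-(u * v)) * -u / u) by
      rw [mul_neg, neg_div, neg_neg, mul_div_assoc, div_self hu.ne', mul_one]]
    exact h3
  have hcont : IntervalIntegrable (fun v => Real.exp (-(u * v))) volume 0 1 :=
    (Real.continuous_exp.comp (by continuity)).intervalIntegrable 0 1
  have := intervalIntegral.integral_eq_sub_of_hasDerivAt h hcont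
  rw [this]
  simp [mul_comm]
  ring

lemma phi_anti {c b : ℝ} (hc : 0 < c) (hcb : c ≤ b) :
    (1 - Real.exp (-b)) / b ≤ (1 - Real.exp (-c)) / c := by
  rw [phi_integral hc, phi_integral (hc.trans_le hcb)]
  apply intervalIntegral.integral_mono_on zero_le_one
  · exact (Real.continuous_exp.comp (by continuity)).intervalIntegrable 0 1
  · exact (Real.continuous_exp.comp (by continuity)).intervalIntegrable 0 1
  · intro v hv
    exact Real.exp_le_exp.2 (by nlinarith [hv.1])

lemma phi_lip {a c : ℝ} (ha : 0 < a) (hac : a ≤ c) :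
    (1 - Real.exp (-a)) / a - (1 - Real.exp (-c)) / c ≤ (c - a) / 2 := by
  rw [phi_integral ha, phi_integral (ha.trans_le hac)]
  have ia : IntervalIntegrable (fun v => Real.exp (-(a * v))) volume 0 1 :=
    (by continuity : Continuous fun v : ℝ => Real.exp (-(a * v))).intervalIntegrable 0 1
  have ic : IntervalIntegrable (fun v => Real.exp (-(c * v))) volume 0 1 :=
    (by continuity : Continuous fun v : ℝ => Real.exp (-(c * v))).intervalIntegrable 0 1
  rw [← intervalIntegral.integral_sub ia ic]
  have h1 : (∫ v in (0:ℝ)..1, (Real.exp (-(a * v)) - Real.exp (-(c * v))))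
      ≤ ∫ v in (0:ℝ)..1, (c - a) * v := by
    apply intervalIntegral.integral_mono_on zero_le_one
    · exact (by continuity : Continuous fun v : ℝ =>
        Real.exp (-(a * v)) - Real.exp (-(c * v))).intervalIntegrable 0 1
    · exact (continuous_const.mul continuous_id).intervalIntegrable 0 1
    · intro v hv
      have hv0 := hv.1
      have e1 : Real.exp (-(a*v)) ≤ 1 := Real.exp_le_one_iff.2 (by nlinarith)
      have e2 : 1 - (c - a) * v ≤ Real.exp (-((c-a) * v)) := by
        have := Real.add_one_le_exp (-((c-a)*v)); linarith
      have e3 : Real.exp (-(a*v)) - Real.exp (-(c*v))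
          = Real.exp (-(a*v)) * (1 - Real.exp (-((c-a)*v))) := by
        rw [mul_sub, mul_one, ← Real.exp_add]; ring_nf
      rw [e3]
      have e4 : 1 - Real.exp (-((c-a)*v)) ≤ (c - a) * v := by linarith
      have e5 : 0 ≤ 1 - Real.exp (-((c-a)*v)) := by
        have : Real.exp (-((c-a)*v)) ≤ 1 := Real.exp_le_one_iff.2 (by nlinarith)
        linarith
      calc Real.exp (-(a*v)) * (1 - Real.exp (-((c-a)*v)))
          ≤ 1 * (1 - Real.exp (-((c-a)*v))) := by
            exact mul_le_mul_of_nonneg_right e1 e5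
        _ ≤ (c - a) * v := by linarith
  have h2 : (∫ v in (0:ℝ)..1, (c - a) * v) = (c - a) / 2 := by
    rw [intervalIntegral.integral_const_mul, integral_id]; ring
  linarith [h1, h2 ▸ h1]

lemma pointwise_bound {x h s : ℝ} (hx : 0 < x) (hh : 0 < h) (hs : 0 < s) :
    Real.sqrt s *
      ((1 - Real.exp (-x ^ 2 / s)) / x ^ 2 +
       (1 - Real.exp (-(x + h) ^ 2 / s)) / (x + h) ^ 2 -
       2 * Real.exp (-h ^ 2 / (4 * s)) * (1 - Real.exp (-(x * (x + h)) / s)) / (x * (x + h)))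
    ≤ 2 * min (s ^ (-(1/2) : ℝ)) ((h ^ 2 / 4) * s ^ (-(3/2) : ℝ))
      + (x * h / 2) * (Real.exp (-h ^ 2 / (4 * s)) * s ^ (-(3/2) : ℝ)) := by
  have hxh : 0 < x + h := by linarith
  have ha : 0 < x ^ 2 / s := by positivity
  have hc : 0 < x * (x + h) / s := by positivity
  have hb : 0 < (x + h) ^ 2 / s := by positivity
  have hac : x ^ 2 / s ≤ x * (x + h) / s := by gcongr <;> nlinarith
  have hcb : x * (x + h) / s ≤ (x + h) ^ 2 / s := by gcongr <;> nlinarith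
  set φa := (1 - Real.exp (-(x ^ 2 / s))) / (x ^ 2 / s) with hφa_def
  set φb := (1 - Real.exp (-((x + h) ^ 2 / s))) / ((x + h) ^ 2 / s) with hφb_def
  set φc := (1 - Real.exp (-(x * (x + h) / s))) / (x * (x + h) / s) with hφc_def
  set E := Real.exp (-(h ^ 2 / (4 * s))) with hE_def
  -- basic facts
  have hE0 : 0 < E := Real.exp_pos _
  have hE1 : E ≤ 1 := Real.exp_le_one_iff.2 (by positivity |> neg_nonpos_of_nonneg)
  have hEh : 1 - E ≤ h ^ 2 / (4 * s) := by
    have := Real.add_one_le_exp (-(h ^ 2 / (4 * s))); linarith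
  have hφa1 : φa ≤ 1 := by
    rw [hφa_def, div_le_one ha]
    have := Real.add_one_le_exp (-(x ^ 2 / s)); linarith
  have hφb1 : φb ≤ 1 := by
    rw [hφb_def, div_le_one hb]
    have := Real.add_one_le_exp (-((x + h) ^ 2 / s)); linarith
  have hφa0 : 0 ≤ φa := by
    apply div_nonneg _ ha.le
    have := Real.exp_le_one_iff.2 (neg_nonpos_of_nonneg ha.le); linarith
  have hφb0 : 0 ≤ φb := by
    apply div_nonneg _ hb.le
    have := Real.exp_le_one_iff.2 (neg_nonpos_of_nonneg hb.le); linarith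
  have hanti : φb ≤ φc := phi_anti hc hcb
  have hlip : φa - φc ≤ x * h / (2 * s) := by
    have h1 := phi_lip ha hac
    have h2 : (x * (x + h) / s - x ^ 2 / s) / 2 = x * h / (2 * s) := by
      ring
    rw [h2] at h1; exact h1
  -- rpow facts
  have hsq : (0:ℝ) ≤ Real.sqrt s := Real.sqrt_nonneg s
  have hs1 : Real.sqrt s / s = s ^ (-(1/2) : ℝ) := by
    rw [Real.sqrt_eq_rpow, show (-(1/2):ℝ) = 1/2 - 1 by norm_num, Real.rpow_sub hs,
      Real.rpow_one]
  have hs3 : Real.sqrt s / (s * s) = s ^ (-(3/2) : ℝ) := by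
    rw [Real.sqrt_eq_rpow, show (-(3/2):ℝ) = 1/2 - 2 by norm_num, Real.rpow_sub hs,
      show (2:ℝ) = ((2:ℕ):ℝ) by norm_num, Real.rpow_natCast]
    congr 1; ring
  -- rewrite LHS
  have e1 : (1 - Real.exp (-x ^ 2 / s)) / x ^ 2 = φa / s := by
    rw [hφa_def, div_div, div_mul_cancel₀ _ hs.ne', neg_div]
  have e2 : (1 - Real.exp (-(x + h) ^ 2 / s)) / (x + h) ^ 2 = φb / s := by
    rw [hφb_def, div_div, div_mul_cancel₀ _ hs.ne', neg_div]
  have e3 : 2 * Real.exp (-h ^ 2 / (4 * s)) * (1 - Real.exp (-(x * (x + h)) / s)) / (x * (x + h))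
      = 2 * E * (φc / s) := by
    rw [hφc_def, hE_def, div_div, div_mul_cancel₀ _ hs.ne', neg_div, neg_div]
    ring
  rw [e1, e2, e3]
  -- decomposition
  have decomp : Real.sqrt s * (φa / s + φb / s - 2 * E * (φc / s))
      = Real.sqrt s / s * ((1 - E) * (φa + φb)) + Real.sqrt s / s * (E * (φa + φb - 2 * φc)) := by
    ring
  rw [decomp]
  have hT1a : Real.sqrt s / s * ((1 - E) * (φa + φb)) ≤ 2 * (s ^ (-(1/2) : ℝ)) := by
    rw [← hs1]
    have hss : 0 ≤ Real.sqrt s / s := by positivity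
    have : (1 - E) * (φa + φb) ≤ 1 * 2 := by
      apply mul_le_mul (by linarith) (by linarith) (by linarith) (by norm_num)
    nlinarith
  have hT1b : Real.sqrt s / s * ((1 - E) * (φa + φb))
      ≤ 2 * ((h ^ 2 / 4) * s ^ (-(3/2) : ℝ)) := by
    have hss : 0 ≤ Real.sqrt s / s := by positivity
    have step : (1 - E) * (φa + φb) ≤ (h ^ 2 / (4 * s)) * 2 := by
      apply mul_le_mul hEh (by linarith) (by linarith) (by positivity)
    have : Real.sqrt s / s * ((1 - E) * (φa + φb))
        ≤ Real.sqrt s / s * ((h ^ 2 / (4 * s)) * 2) :=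
      mul_le_mul_of_nonneg_left step hss
    have eq2 : Real.sqrt s / s * ((h ^ 2 / (4 * s)) * 2)
        = 2 * ((h ^ 2 / 4) * (Real.sqrt s / (s * s))) := by
      ring
    rw [eq2, hs3] at this
    exact this
  have hT1 : Real.sqrt s / s * ((1 - E) * (φa + φb))
      ≤ 2 * min (s ^ (-(1/2) : ℝ)) ((h ^ 2 / 4) * s ^ (-(3/2) : ℝ)) := by
    rcases le_total (s ^ (-(1/2) : ℝ)) ((h ^ 2 / 4) * s ^ (-(3/2) : ℝ)) with hm | hm
    · rw [min_eq_left hm]; exact hT1a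
    · rw [min_eq_right hm]; exact hT1b
  have hT2 : Real.sqrt s / s * (E * (φa + φb - 2 * φc))
      ≤ x * h / 2 * (E * s ^ (-(3/2) : ℝ)) := by
    have hss : 0 ≤ Real.sqrt s / s := by positivity
    have step : E * (φa + φb - 2 * φc) ≤ E * (x * h / (2 * s)) := by
      apply mul_le_mul_of_nonneg_left (by linarith) hE0.le
    have : Real.sqrt s / s * (E * (φa + φb - 2 * φc))
        ≤ Real.sqrt s / s * (E * (x * h / (2 * s))) := mul_le_mul_of_nonneg_left step hss
    have eq2 : Real.sqrt s / s * (E * (x * h / (2 * s)))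
        = x * h / 2 * (E * (Real.sqrt s / (s * s))) := by
      ring
    rw [eq2, hs3] at this
    exact this
  have hfold : Real.exp (-h ^ 2 / (4 * s)) = E := by rw [hE_def, neg_div]
  rw [hfold]
  linarith


lemma g1_integrableOn_Ioc {h : ℝ} (hh : 0 < h) {T : ℝ} (hT : 0 < T) :
    IntegrableOn (fun s : ℝ => 2 * min (s ^ (-(1/2) : ℝ)) ((h ^ 2 / 4) * s ^ (-(3/2) : ℝ)))
      (Ioc 0 T) := by
  have hmaj : IntegrableOn (fun s : ℝ => 2 * s ^ (-(1/2) : ℝ)) (Ioc 0 T) := by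
    have := (intervalIntegral.intervalIntegrable_rpow' (a := 0) (b := T) (r := -(1/2)) (by norm_num))
    rw [intervalIntegrable_iff_integrableOn_Ioc_of_le hT.le] at this
    exact this.const_mul 2
  apply hmaj.integrable.mono'
  · apply Measurable.aestronglyMeasurable
    fun_prop
  · rw [ae_restrict_iff' measurableSet_Ioc]
    filter_upwards with s hs
    have hs0 : 0 < s := hs.1
    have h1 : (0:ℝ) ≤ s ^ (-(1/2) : ℝ) := rpow_nonneg hs0.le _
    have h2 : (0:ℝ) ≤ (h ^ 2 / 4) * s ^ (-(3/2) : ℝ) := by positivity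
    rw [Real.norm_eq_abs, abs_of_nonneg (by positivity)]
    have := min_le_left (s ^ (-(1/2) : ℝ)) ((h ^ 2 / 4) * s ^ (-(3/2) : ℝ))
    nlinarith
lemma g1_integrableOn_Ioi {h : ℝ} (hh : 0 < h) {T : ℝ} (hT : 0 < T) :
    IntegrableOn (fun s : ℝ => 2 * min (s ^ (-(1/2) : ℝ)) ((h ^ 2 / 4) * s ^ (-(3/2) : ℝ)))
      (Ioi T) := by
  have hmaj : IntegrableOn (fun s : ℝ => 2 * ((h ^ 2 / 4) * s ^ (-(3/2) : ℝ))) (Ioi T) :=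
    ((integrableOn_Ioi_rpow_of_lt (by norm_num) hT).const_mul (h ^ 2 / 4)).const_mul 2
  apply hmaj.integrable.mono'
  · apply Measurable.aestronglyMeasurable
    fun_prop
  · rw [ae_restrict_iff' measurableSet_Ioi]
    filter_upwards with s hs
    have hs0 : 0 < s := hT.trans hs
    have h1 : (0:ℝ) ≤ s ^ (-(1/2) : ℝ) := rpow_nonneg hs0.le _
    have h2 : (0:ℝ) ≤ (h ^ 2 / 4) * s ^ (-(3/2) : ℝ) := by positivity
    rw [Real.norm_eq_abs, abs_of_nonneg (by positivity)]
    have := min_le_right (s ^ (-(1/2) : ℝ)) ((h ^ 2 / 4) * s ^ (-(3/2) : ℝ))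
    nlinarith

lemma g1_integrableOn {h : ℝ} (hh : 0 < h) :
    IntegrableOn (fun s : ℝ => 2 * min (s ^ (-(1/2) : ℝ)) ((h ^ 2 / 4) * s ^ (-(3/2) : ℝ)))
      (Ioi 0) := by
  rw [← Ioc_union_Ioi_eq_Ioi (le_of_lt (by positivity : (0:ℝ) < h ^ 2 / 4))]
  exact (g1_integrableOn_Ioc hh (by positivity)).union (g1_integrableOn_Ioi hh (by positivity))

lemma g1_nonneg_ae {h : ℝ} (hh : 0 < h) :
    0 ≤ᵐ[volume.restrict (Ioi (0:ℝ))]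
      (fun s : ℝ => 2 * min (s ^ (-(1/2) : ℝ)) ((h ^ 2 / 4) * s ^ (-(3/2) : ℝ))) := by
  rw [Filter.EventuallyLE, ae_restrict_iff' measurableSet_Ioi]
  filter_upwards with s hs
  have hs0 : 0 < s := hs
  have h1 : (0:ℝ) ≤ s ^ (-(1/2) : ℝ) := rpow_nonneg hs0.le _
  have h2 : (0:ℝ) ≤ (h ^ 2 / 4) * s ^ (-(3/2) : ℝ) := by positivity
  simp only [Pi.zero_apply]
  positivity

lemma g1_integral_le {t h : ℝ} (ht : 0 < t) (hh : 0 < h) :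
    (∫ s in Ioc (0:ℝ) t, 2 * min (s ^ (-(1/2) : ℝ)) ((h ^ 2 / 4) * s ^ (-(3/2) : ℝ))) ≤ 4 * h := by
  set T := h ^ 2 / 4 with hT_def
  have hT : 0 < T := by positivity
  have step1 : (∫ s in Ioc (0:ℝ) t, 2 * min (s ^ (-(1/2) : ℝ)) ((h ^ 2 / 4) * s ^ (-(3/2) : ℝ)))
      ≤ ∫ s in Ioi (0:ℝ), 2 * min (s ^ (-(1/2) : ℝ)) ((h ^ 2 / 4) * s ^ (-(3/2) : ℝ)) := by
    apply setIntegral_mono_set (g1_integrableOn hh) (g1_nonneg_ae hh)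
    exact Filter.Eventually.of_forall fun s (hs : s ∈ Ioc (0:ℝ) t) => hs.1
  have split : (∫ s in Ioi (0:ℝ), 2 * min (s ^ (-(1/2) : ℝ)) ((h ^ 2 / 4) * s ^ (-(3/2) : ℝ)))
      = (∫ s in Ioc (0:ℝ) T, 2 * min (s ^ (-(1/2) : ℝ)) ((h ^ 2 / 4) * s ^ (-(3/2) : ℝ)))
      + ∫ s in Ioi T, 2 * min (s ^ (-(1/2) : ℝ)) ((h ^ 2 / 4) * s ^ (-(3/2) : ℝ)) := by
    rw [← setIntegral_union (Ioc_disjoint_Ioi le_rfl) measurableSet_Ioi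
      (g1_integrableOn_Ioc hh hT) (g1_integrableOn_Ioi hh hT),
      Ioc_union_Ioi_eq_Ioi hT.le]
  have bound1 : (∫ s in Ioc (0:ℝ) T, 2 * min (s ^ (-(1/2) : ℝ)) ((h ^ 2 / 4) * s ^ (-(3/2) : ℝ)))
      ≤ ∫ s in Ioc (0:ℝ) T, 2 * s ^ (-(1/2) : ℝ) := by
    apply setIntegral_mono_on (g1_integrableOn_Ioc hh hT) ?_ measurableSet_Ioc
    · intro s hs
      have h1 := min_le_left (s ^ (-(1/2) : ℝ)) ((h ^ 2 / 4) * s ^ (-(3/2) : ℝ))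
      linarith
    · have := (intervalIntegral.intervalIntegrable_rpow' (a := 0) (b := T) (r := -(1/2)) (by norm_num))
      rw [intervalIntegrable_iff_integrableOn_Ioc_of_le hT.le] at this
      exact this.const_mul 2
  have bound2 : (∫ s in Ioi T, 2 * min (s ^ (-(1/2) : ℝ)) ((h ^ 2 / 4) * s ^ (-(3/2) : ℝ)))
      ≤ ∫ s in Ioi T, 2 * ((h ^ 2 / 4) * s ^ (-(3/2) : ℝ)) := by
    apply setIntegral_mono_on (g1_integrableOn_Ioi hh hT) ?_ measurableSet_Ioi
    · intro s hs
      have h1 := min_le_right (s ^ (-(1/2) : ℝ)) ((h ^ 2 / 4) * s ^ (-(3/2) : ℝ))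
      linarith
    · exact ((integrableOn_Ioi_rpow_of_lt (by norm_num) hT).const_mul (h ^ 2 / 4)).const_mul 2
  have hT12 : T ^ ((1:ℝ)/2) = h / 2 := by
    rw [hT_def, show h ^ 2 / 4 = (h/2) ^ 2 by ring, ← Real.rpow_natCast (h/2) 2,
      ← Real.rpow_mul (by positivity)]
    norm_num
  have hTm12 : T ^ (-(1:ℝ)/2) = 2 / h := by
    rw [show (-(1:ℝ)/2) = -((1:ℝ)/2) by norm_num, Real.rpow_neg hT.le, hT12]
    rw [inv_div]
  have calc1 : (∫ s in Ioc (0:ℝ) T, 2 * s ^ (-(1/2) : ℝ)) = 2 * h := by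
    rw [← intervalIntegral.integral_of_le hT.le, intervalIntegral.integral_const_mul,
      integral_rpow (Or.inl (by norm_num))]
    rw [show (-(1/2) : ℝ) + 1 = 1/2 by norm_num, Real.zero_rpow (by norm_num), hT12]
    ring
  have calc2 : (∫ s in Ioi T, 2 * ((h ^ 2 / 4) * s ^ (-(3/2) : ℝ))) = 2 * h := by
    rw [integral_const_mul, integral_const_mul,
      integral_Ioi_rpow_of_lt (by norm_num) hT]
    rw [show (-(3/2) : ℝ) + 1 = -(1)/2 by norm_num, hTm12]
    field_simp
    ring
  calc (∫ s in Ioc (0:ℝ) t, 2 * min (s ^ (-(1/2) : ℝ)) ((h ^ 2 / 4) * s ^ (-(3/2) : ℝ)))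
      ≤ _ := step1
    _ = _ := split
    _ ≤ (∫ s in Ioc (0:ℝ) T, 2 * s ^ (-(1/2) : ℝ))
        + ∫ s in Ioi T, 2 * ((h ^ 2 / 4) * s ^ (-(3/2) : ℝ)) := by linarith
    _ = 4 * h := by rw [calc1, calc2]; ring


lemma exp_bound_aux {v : ℝ} (hv : 0 < v) : v ^ ((3:ℝ)/2) * Real.exp (-v) ≤ 4 := by
  rcases le_total v 1 with h1 | h1
  · have h2 : v ^ ((3:ℝ)/2) ≤ 1 := Real.rpow_le_one hv.le h1 (by norm_num)
    have he : Real.exp (-v) ≤ 1 := Real.exp_le_one_iff.2 (by linarith)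
    nlinarith [Real.exp_pos (-v), Real.rpow_nonneg hv.le ((3:ℝ)/2)]
  · have h2 : v ^ ((3:ℝ)/2) ≤ v ^ (2:ℝ) := Real.rpow_le_rpow_of_exponent_le h1 (by norm_num)
    have h3 : v ^ (2:ℝ) = v ^ 2 := by
      rw [show (2:ℝ) = ((2:ℕ):ℝ) by norm_num, Real.rpow_natCast]
    have h4 : 1 + v/2 ≤ Real.exp (v/2) := by linarith [Real.add_one_le_exp (v/2)]
    have h5 : Real.exp (v/2) * Real.exp (v/2) = Real.exp v := by
      rw [← Real.exp_add]; ring_nf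
    have h6 : v ^ 2 ≤ 4 * Real.exp v := by nlinarith [Real.exp_pos (v/2)]
    have hev : 0 < Real.exp v := Real.exp_pos v
    have he : Real.exp (-v) = 1 / Real.exp v := by rw [Real.exp_neg]; ring
    rw [he]
    calc v ^ ((3:ℝ)/2) * (1/Real.exp v) ≤ v ^ 2 * (1/Real.exp v) := by
          apply mul_le_mul_of_nonneg_right (h3 ▸ h2) (by positivity)
      _ ≤ 4 := by rw [mul_one_div, div_le_iff₀ hev]; linarith

lemma g2_integrand_le {b s : ℝ} (hb : 0 < b) (hs : 0 < s) :
    Real.exp (-(b/s)) * s ^ (-(3/2) : ℝ) ≤ 4 * b ^ (-(3/2) : ℝ) := by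
  have hv : 0 < b/s := by positivity
  have key := exp_bound_aux hv
  have hb32 : (0:ℝ) < b ^ ((3:ℝ)/2) := Real.rpow_pos_of_pos hb _
  have hs32 : (0:ℝ) < s ^ ((3:ℝ)/2) := Real.rpow_pos_of_pos hs _
  have e1 : s ^ (-(3/2) : ℝ) = (b/s) ^ ((3:ℝ)/2) * b ^ (-(3/2) : ℝ) := by
    rw [Real.div_rpow hb.le hs.le, show (-(3/2) : ℝ) = -((3:ℝ)/2) by norm_num,
      Real.rpow_neg hs.le, Real.rpow_neg hb.le]
    field_simp
  rw [e1, show Real.exp (-(b/s)) * ((b/s) ^ ((3:ℝ)/2) * b ^ (-(3/2) : ℝ))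
    = ((b/s) ^ ((3:ℝ)/2) * Real.exp (-(b/s))) * b ^ (-(3/2) : ℝ) by ring]
  exact mul_le_mul_of_nonneg_right key (Real.rpow_nonneg hb.le _)

lemma g2_integrableOn {b : ℝ} (hb : 0 < b) :
    IntegrableOn (fun s : ℝ => Real.exp (-(b/s)) * s ^ (-(3/2) : ℝ)) (Ioi 0) := by
  rw [← Ioc_union_Ioi_eq_Ioi (zero_le_one (α := ℝ))]
  apply IntegrableOn.union
  · have hconst : IntegrableOn (fun _ : ℝ => 4 * b ^ (-(3/2) : ℝ)) (Ioc (0:ℝ) 1) :=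
      integrableOn_const measure_Ioc_lt_top.ne
    apply hconst.integrable.mono'
    · apply Measurable.aestronglyMeasurable; fun_prop
    · rw [ae_restrict_iff' measurableSet_Ioc]
      filter_upwards with s hs
      have hs0 : 0 < s := hs.1
      rw [Real.norm_eq_abs, abs_of_nonneg (by positivity)]
      exact g2_integrand_le hb hs0
  · have hmaj : IntegrableOn (fun s : ℝ => s ^ (-(3/2) : ℝ)) (Ioi (1:ℝ)) :=
      integrableOn_Ioi_rpow_of_lt (by norm_num) one_pos
    apply hmaj.integrable.mono'
    · apply Measurable.aestronglyMeasurable; fun_prop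
    · rw [ae_restrict_iff' measurableSet_Ioi]
      filter_upwards with s hs
      have hs0 : (0:ℝ) < s := lt_trans one_pos hs
      rw [Real.norm_eq_abs, abs_of_nonneg (by positivity)]
      have he : Real.exp (-(b/s)) ≤ 1 := Real.exp_le_one_iff.2 (by positivity |> neg_nonpos_of_nonneg)
      nlinarith [Real.rpow_nonneg hs0.le (-(3/2) : ℝ), Real.exp_pos (-(b/s))]

lemma g2_value {b : ℝ} (hb : 0 < b) :
    (∫ s in Ioi (0:ℝ), Real.exp (-(b/s)) * s ^ (-(3/2) : ℝ))
      = b ^ (-(1/2) : ℝ) * Real.Gamma (1/2) := by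
  have subst := integral_comp_rpow_Ioi
    (fun u : ℝ => u ^ (-(1/2) : ℝ) * Real.exp (-b * u)) (p := (-1:ℝ)) (by norm_num)
  have e : ∀ x ∈ Ioi (0:ℝ),
      (|(-1:ℝ)| * x ^ ((-1:ℝ) - 1)) •
        ((x ^ ((-1):ℝ)) ^ (-(1/2) : ℝ) * Real.exp (-b * x ^ ((-1):ℝ)))
      = Real.exp (-(b/x)) * x ^ (-(3/2) : ℝ) := by
    intro x hx
    have hx0 : (0:ℝ) < x := hx
    rw [smul_eq_mul, abs_neg, abs_one, one_mul, ← Real.rpow_mul hx0.le,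
      Real.rpow_neg_one]
    have harg : -b * x⁻¹ = -(b/x) := by field_simp
    rw [harg, show ((-1:ℝ) * (-(1/2))) = (1/2 : ℝ) by norm_num]
    have hcomb : x ^ ((-1:ℝ) - 1) * x ^ ((1:ℝ)/2) = x ^ (-(3/2) : ℝ) := by
      rw [← Real.rpow_add hx0]; norm_num
    calc x ^ ((-1:ℝ) - 1) * (x ^ ((1:ℝ)/2) * Real.exp (-(b/x)))
        = (x ^ ((-1:ℝ) - 1) * x ^ ((1:ℝ)/2)) * Real.exp (-(b/x)) := by ring
      _ = Real.exp (-(b/x)) * x ^ (-(3/2) : ℝ) := by rw [hcomb]; ring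
  have hgamma := integral_rpow_mul_exp_neg_mul_rpow (p := 1) (q := -(1/2)) one_pos
    (by norm_num) hb
  simp only [Real.rpow_one] at hgamma
  calc (∫ s in Ioi (0:ℝ), Real.exp (-(b/s)) * s ^ (-(3/2) : ℝ))
      = ∫ x in Ioi (0:ℝ), (|(-1:ℝ)| * x ^ ((-1:ℝ) - 1)) •
          ((x ^ ((-1):ℝ)) ^ (-(1/2) : ℝ) * Real.exp (-b * x ^ ((-1):ℝ))) :=
        (setIntegral_congr_fun measurableSet_Ioi e).symm
    _ = ∫ u in Ioi (0:ℝ), u ^ (-(1/2) : ℝ) * Real.exp (-b * u) := subst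
    _ = b ^ (-(1/2) : ℝ) * Real.Gamma (1/2) := by
        rw [hgamma]; norm_num


lemma g2_integral_le {t h : ℝ} (ht : 0 < t) (hh : 0 < h) :
    (∫ s in Ioc (0:ℝ) t, Real.exp (-h ^ 2 / (4 * s)) * s ^ (-(3/2) : ℝ))
      ≤ Real.Gamma (1/2) * (2/h) := by
  have hb : (0:ℝ) < h ^ 2 / 4 := by positivity
  have hfun : ∀ s ∈ Ioc (0:ℝ) t, Real.exp (-h ^ 2 / (4 * s)) * s ^ (-(3/2) : ℝ)
      = Real.exp (-((h ^ 2 / 4)/s)) * s ^ (-(3/2) : ℝ) := by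
    intro s hs
    congr 2
    rw [neg_div, div_div]
  rw [setIntegral_congr_fun measurableSet_Ioc hfun]
  have step : (∫ s in Ioc (0:ℝ) t, Real.exp (-((h ^ 2 / 4)/s)) * s ^ (-(3/2) : ℝ))
      ≤ ∫ s in Ioi (0:ℝ), Real.exp (-((h ^ 2 / 4)/s)) * s ^ (-(3/2) : ℝ) := by
    apply setIntegral_mono_set (g2_integrableOn hb) ?_ ?_
    · rw [Filter.EventuallyLE, ae_restrict_iff' measurableSet_Ioi]
      filter_upwards with s hs
      have hs0 : (0:ℝ) < s := hs
      simp only [Pi.zero_apply]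
      positivity
    · exact Filter.Eventually.of_forall fun s (hs : s ∈ Ioc (0:ℝ) t) => hs.1
  rw [g2_value hb] at step
  have hbv : (h ^ 2 / 4 : ℝ) ^ (-(1/2) : ℝ) = 2 / h := by
    rw [show (-(1/2) : ℝ) = -((1:ℝ)/2) by norm_num, Real.rpow_neg hb.le,
      show h ^ 2 / 4 = (h/2) ^ 2 by ring, ← Real.rpow_natCast (h/2) 2,
      ← Real.rpow_mul (by positivity)]
    norm_num [inv_div]
  rw [hbv] at step
  linarith [step]

noncomputable def J (t x h : ℝ) : ℝ :=
  ∫ s in Set.Ioc (0:ℝ) t, Real.sqrt s *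
    ((1 - Real.exp (-x ^ 2 / s)) / x ^ 2 +
     (1 - Real.exp (-(x + h) ^ 2 / s)) / (x + h) ^ 2 -
     2 * Real.exp (-h ^ 2 / (4 * s)) * (1 - Real.exp (-(x * (x + h)) / s)) / (x * (x + h)))

theorem J_first_bound (t x h : ℝ) (ht : 0 < t) (hx : 0 < x) (hh : 0 < h) :
    J t x h ≤ 4 * h + Real.Gamma (1/2) * x * (x + h) / h := by
  have hxh : 0 < x + h := by linarith
  have hb : (0:ℝ) < h ^ 2 / 4 := by positivity
  set f := fun s : ℝ => Real.sqrt s *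
      ((1 - Real.exp (-x ^ 2 / s)) / x ^ 2 +
       (1 - Real.exp (-(x + h) ^ 2 / s)) / (x + h) ^ 2 -
       2 * Real.exp (-h ^ 2 / (4 * s)) * (1 - Real.exp (-(x * (x + h)) / s)) / (x * (x + h)))
    with hf_def
  -- integrability of f
  have hf_int : IntegrableOn f (Ioc (0:ℝ) t) := by
    set M : ℝ := Real.sqrt t * (1 / x ^ 2 + 1 / (x + h) ^ 2 + 2 / (x * (x + h))) with hM_def
    have hconst : IntegrableOn (fun _ : ℝ => M) (Ioc (0:ℝ) t) :=
      integrableOn_const measure_Ioc_lt_top.ne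
    apply hconst.integrable.mono'
    · apply Measurable.aestronglyMeasurable
      rw [hf_def]; fun_prop
    · rw [ae_restrict_iff' measurableSet_Ioc]
      filter_upwards with s hs
      have hs0 : 0 < s := hs.1
      have hst : s ≤ t := hs.2
      have hA0 : (0:ℝ) < Real.exp (-x ^ 2 / s) := Real.exp_pos _
      have hA1 : Real.exp (-x ^ 2 / s) ≤ 1 :=
        Real.exp_le_one_iff.2 (by rw [neg_div]; exact neg_nonpos_of_nonneg (by positivity))
      have hB0 : (0:ℝ) < Real.exp (-(x + h) ^ 2 / s) := Real.exp_pos _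
      have hB1 : Real.exp (-(x + h) ^ 2 / s) ≤ 1 :=
        Real.exp_le_one_iff.2 (by rw [neg_div]; exact neg_nonpos_of_nonneg (by positivity))
      have hC0 : (0:ℝ) < Real.exp (-(x * (x + h)) / s) := Real.exp_pos _
      have hC1 : Real.exp (-(x * (x + h)) / s) ≤ 1 :=
        Real.exp_le_one_iff.2 (by rw [neg_div]; exact neg_nonpos_of_nonneg (by positivity))
      have hE0 : (0:ℝ) < Real.exp (-h ^ 2 / (4 * s)) := Real.exp_pos _
      have hE1 : Real.exp (-h ^ 2 / (4 * s)) ≤ 1 :=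
        Real.exp_le_one_iff.2 (by rw [neg_div]; exact neg_nonpos_of_nonneg (by positivity))
      have t1 : (0:ℝ) ≤ (1 - Real.exp (-x ^ 2 / s)) / x ^ 2 :=
        div_nonneg (by linarith) (by positivity)
      have t2 : (1 - Real.exp (-x ^ 2 / s)) / x ^ 2 ≤ 1 / x ^ 2 := by gcongr; linarith
      have t3 : (0:ℝ) ≤ (1 - Real.exp (-(x + h) ^ 2 / s)) / (x + h) ^ 2 :=
        div_nonneg (by linarith) (by positivity)
      have t4 : (1 - Real.exp (-(x + h) ^ 2 / s)) / (x + h) ^ 2 ≤ 1 / (x + h) ^ 2 := by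
        gcongr; linarith
      have t5 : (0:ℝ) ≤ 2 * Real.exp (-h ^ 2 / (4 * s)) *
          (1 - Real.exp (-(x * (x + h)) / s)) / (x * (x + h)) :=
        div_nonneg (by nlinarith) (by positivity)
      have t6 : 2 * Real.exp (-h ^ 2 / (4 * s)) *
          (1 - Real.exp (-(x * (x + h)) / s)) / (x * (x + h)) ≤ 2 / (x * (x + h)) := by
        gcongr
        nlinarith
      have hP : |(1 - Real.exp (-x ^ 2 / s)) / x ^ 2 +
          (1 - Real.exp (-(x + h) ^ 2 / s)) / (x + h) ^ 2 -
          2 * Real.exp (-h ^ 2 / (4 * s)) * (1 - Real.exp (-(x * (x + h)) / s)) / (x * (x + h))|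
          ≤ 1 / x ^ 2 + 1 / (x + h) ^ 2 + 2 / (x * (x + h)) := by
        rw [abs_le]
        constructor <;> [linarith; linarith]
      rw [hf_def]
      simp only [Real.norm_eq_abs]
      rw [abs_mul, abs_of_nonneg (Real.sqrt_nonneg s), hM_def]
      exact mul_le_mul (Real.sqrt_le_sqrt hst) hP (abs_nonneg _) (Real.sqrt_nonneg t)
  -- integrability of the comparison functions
  have hg1_int : IntegrableOn
      (fun s : ℝ => 2 * min (s ^ (-(1/2) : ℝ)) ((h ^ 2 / 4) * s ^ (-(3/2) : ℝ)))
      (Ioc (0:ℝ) t) := (g1_integrableOn hh).mono_set Ioc_subset_Ioi_self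
  have hg2a_int : IntegrableOn
      (fun s : ℝ => Real.exp (-h ^ 2 / (4 * s)) * s ^ (-(3/2) : ℝ)) (Ioc (0:ℝ) t) := by
    apply IntegrableOn.congr_fun ((g2_integrableOn hb).mono_set Ioc_subset_Ioi_self)
      ?_ measurableSet_Ioc
    intro s hs
    simp only
    rw [div_div, ← neg_div]
  have hg2_int : IntegrableOn
      (fun s : ℝ => (x * h / 2) * (Real.exp (-h ^ 2 / (4 * s)) * s ^ (-(3/2) : ℝ)))
      (Ioc (0:ℝ) t) := hg2a_int.const_mul _
  -- pointwise comparison and conclusion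
  have hfg : ∀ s ∈ Ioc (0:ℝ) t, f s ≤
      2 * min (s ^ (-(1/2) : ℝ)) ((h ^ 2 / 4) * s ^ (-(3/2) : ℝ))
      + (x * h / 2) * (Real.exp (-h ^ 2 / (4 * s)) * s ^ (-(3/2) : ℝ)) :=
    fun s hs => pointwise_bound hx hh hs.1
  have step1 : (∫ s in Ioc (0:ℝ) t, f s)
      ≤ ∫ s in Ioc (0:ℝ) t,
        (2 * min (s ^ (-(1/2) : ℝ)) ((h ^ 2 / 4) * s ^ (-(3/2) : ℝ))
          + (x * h / 2) * (Real.exp (-h ^ 2 / (4 * s)) * s ^ (-(3/2) : ℝ))) :=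
    setIntegral_mono_on hf_int (hg1_int.add hg2_int) measurableSet_Ioc hfg
  have step2 : (∫ s in Ioc (0:ℝ) t,
        (2 * min (s ^ (-(1/2) : ℝ)) ((h ^ 2 / 4) * s ^ (-(3/2) : ℝ))
          + (x * h / 2) * (Real.exp (-h ^ 2 / (4 * s)) * s ^ (-(3/2) : ℝ))))
      = (∫ s in Ioc (0:ℝ) t, 2 * min (s ^ (-(1/2) : ℝ)) ((h ^ 2 / 4) * s ^ (-(3/2) : ℝ)))
        + ∫ s in Ioc (0:ℝ) t,
            (x * h / 2) * (Real.exp (-h ^ 2 / (4 * s)) * s ^ (-(3/2) : ℝ)) :=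
    integral_add hg1_int hg2_int
  have step3 : (∫ s in Ioc (0:ℝ) t,
        (x * h / 2) * (Real.exp (-h ^ 2 / (4 * s)) * s ^ (-(3/2) : ℝ)))
      = (x * h / 2) * ∫ s in Ioc (0:ℝ) t, Real.exp (-h ^ 2 / (4 * s)) * s ^ (-(3/2) : ℝ) :=
    integral_const_mul _ _
  have hbound2 : (x * h / 2) *
      (∫ s in Ioc (0:ℝ) t, Real.exp (-h ^ 2 / (4 * s)) * s ^ (-(3/2) : ℝ))
      ≤ (x * h / 2) * (Real.Gamma (1/2) * (2/h)) :=
    mul_le_mul_of_nonneg_left (g2_integral_le ht hh) (by positivity)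
  have hval : (x * h / 2) * (Real.Gamma (1/2) * (2/h)) = Real.Gamma (1/2) * x := by
    field_simp
  have hG : 0 < Real.Gamma (1/2) := Real.Gamma_pos_of_pos (by norm_num)
  have hmono : Real.Gamma (1/2) * x ≤ Real.Gamma (1/2) * x * (x + h) / h := by
    rw [le_div_iff₀ hh]
    nlinarith [mul_nonneg (mul_nonneg hG.le hx.le) hx.le]
  have hg1 := g1_integral_le ht hh
  have hJ : J t x h = ∫ s in Ioc (0:ℝ) t, f s := rfl
  rw [hJ]
  linarith
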